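/- With the notation of the previous statement, and defining η(x) = ⟨φ', x⟩ · ε_{k-2}(x), the squared inner product satisfies: |⟨γ^{(k)}, ε_{k-1}(x)⟩|² = |⟨γ^{(k-1)}, ε_{k-2}(x)⟩|² − 2⟨ψ, η(x)⟩ · ⟨φ', ψ⟩/‖φ'‖² + |⟨φ', ψ⟩|²·|⟨φ', x⟩|² / ‖φ'‖⁴. -/

import Mathlib

open RealInnerProductSpace

theorem stmt_15 (n : ℕ) (Φk2 Φk1 : Submodule ℝ (EuclideanSpace ℝ (Fin n)))
    (φk1 : EuclideanSpace ℝ (Fin n))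
    (hΦ : Φk1 = Φk2 ⊔ Submodule.span ℝ {φk1})
    (φ' : EuclideanSpace ℝ (Fin n))
    (hφ' : φ' = φk1 - (Submodule.orthogonalProjectionOnto Φk2 φk1 : EuclideanSpace ℝ (Fin n)))
    (hφ'0 : φ' ≠ 0)
    (ψ x γk γk1 εk1 εk2 η : EuclideanSpace ℝ (Fin n))
    (hγk : γk = ψ - (Submodule.orthogonalProjectionOnto Φk1 ψ : EuclideanSpace ℝ (Fin n)))
    (hγk1 : γk1 = ψ - (Submodule.orthogonalProjectionOnto Φk2 ψ : EuclideanSpace ℝ (Fin n)))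
    (hεk1 : εk1 = x - (Submodule.orthogonalProjectionOnto Φk1 x : EuclideanSpace ℝ (Fin n)))
    (hεk2 : εk2 = x - (Submodule.orthogonalProjectionOnto Φk2 x : EuclideanSpace ℝ (Fin n)))
    (hη : η = ⟪φ', x⟫ • εk2) :
    |⟪γk, εk1⟫| ^ 2 =
      |⟪γk1, εk2⟫| ^ 2 - 2 * ⟪ψ, η⟫ * (⟪φ', ψ⟫ / ‖φ'‖ ^ 2)
        + |⟪φ', ψ⟫| ^ 2 * |⟪φ', x⟫| ^ 2 / ‖φ'‖ ^ 4 := by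
  have hns : ‖φ'‖ ^ 2 ≠ 0 := pow_ne_zero _ (norm_ne_zero_iff.mpr hφ'0)
  -- φ' is orthogonal to Φk2
  have hperp : ∀ w ∈ Φk2, ⟪φ', w⟫ = 0 := by
    intro w hw
    rw [hφ']
    exact Submodule.starProjection_inner_eq_zero φk1 w hw
  have hφ'mem : φ' ∈ Φk1 := by
    rw [hφ', hΦ]
    exact sub_mem (le_sup_right (a := Φk2) (Submodule.subset_span rfl))
      (le_sup_left (b := Submodule.span ℝ {φk1}) (Submodule.orthogonalProjectionOnto Φk2 φk1).2)
  -- projection formula onto Φk1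
  have key : ∀ v : EuclideanSpace ℝ (Fin n),
      (Submodule.orthogonalProjectionOnto Φk1 v : EuclideanSpace ℝ (Fin n)) =
        (Submodule.orthogonalProjectionOnto Φk2 v : EuclideanSpace ℝ (Fin n))
          + (⟪φ', v⟫ / ‖φ'‖ ^ 2) • φ' := by
    intro v
    apply Submodule.eq_starProjection_of_mem_of_inner_eq_zero
    · refine add_mem ?_ ?_
      · rw [hΦ]; exact le_sup_left (b := Submodule.span ℝ {φk1}) (Submodule.orthogonalProjectionOnto Φk2 v).2
      · exact Submodule.smul_mem _ _ hφ'mem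
    · intro w hw
      have hr : v - ((Submodule.orthogonalProjectionOnto Φk2 v : EuclideanSpace ℝ (Fin n))
          + (⟪φ', v⟫ / ‖φ'‖ ^ 2) • φ')
          = (v - (Submodule.orthogonalProjectionOnto Φk2 v : EuclideanSpace ℝ (Fin n)))
            - (⟪φ', v⟫ / ‖φ'‖ ^ 2) • φ' := by abel
      rw [hr]
      have hΦk2 : ∀ u ∈ Φk2,
          ⟪(v - (Submodule.orthogonalProjectionOnto Φk2 v : EuclideanSpace ℝ (Fin n)))
            - (⟪φ', v⟫ / ‖φ'‖ ^ 2) • φ', u⟫ = 0 := by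
        intro u hu
        rw [inner_sub_left, inner_smul_left,
          (show ⟪v - (Submodule.orthogonalProjectionOnto Φk2 v : EuclideanSpace ℝ (Fin n)), u⟫ = 0
            from Submodule.starProjection_inner_eq_zero v u hu), hperp u hu]
        simp
      have hφk1self :
          ⟪(v - (Submodule.orthogonalProjectionOnto Φk2 v : EuclideanSpace ℝ (Fin n)))
            - (⟪φ', v⟫ / ‖φ'‖ ^ 2) • φ', φk1⟫ = 0 := by
        have hφk1 : φk1 = φ' + (Submodule.orthogonalProjectionOnto Φk2 φk1 : EuclideanSpace ℝ (Fin n)) := by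
          rw [hφ']; abel
        rw [hφk1, inner_add_right,
          hΦk2 _ (Submodule.orthogonalProjectionOnto Φk2 φk1).2, add_zero,
          inner_sub_left, inner_smul_left, real_inner_self_eq_norm_sq,
          inner_sub_left]
        have : ⟪(Submodule.orthogonalProjectionOnto Φk2 v : EuclideanSpace ℝ (Fin n)), φ'⟫ = 0 := by
          rw [real_inner_comm]; exact hperp _ (Submodule.orthogonalProjectionOnto Φk2 v).2
        rw [this, real_inner_comm v φ']
        rw [conj_trivial]
        field_simp
        ring
      -- w ∈ Φk1 = Φk2 ⊔ span {φk1}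
      rw [hΦ] at hw
      rcases Submodule.mem_sup.mp hw with ⟨y, hy, z, hz, rfl⟩
      rcases Submodule.mem_span_singleton.mp hz with ⟨c, rfl⟩
      rw [inner_add_right, real_inner_smul_right, hΦk2 y hy, hφk1self]
      simp
  -- inner products with φ' pass through
  have hγ1φ : ⟪φ', γk1⟫ = ⟪φ', ψ⟫ := by
    rw [hγk1, inner_sub_right, hperp _ (Submodule.orthogonalProjectionOnto Φk2 ψ).2, sub_zero]
  have hε2φ : ⟪φ', εk2⟫ = ⟪φ', x⟫ := by
    rw [hεk2, inner_sub_right, hperp _ (Submodule.orthogonalProjectionOnto Φk2 x).2, sub_zero]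
  have hψε : ⟪ψ, εk2⟫ = ⟪γk1, εk2⟫ := by
    rw [hγk1, inner_sub_left]
    have : ⟪(Submodule.orthogonalProjectionOnto Φk2 ψ : EuclideanSpace ℝ (Fin n)), εk2⟫ = 0 := by
      rw [real_inner_comm, hεk2]
      exact Submodule.starProjection_inner_eq_zero x _ (Submodule.orthogonalProjectionOnto Φk2 ψ).2
    rw [this, sub_zero]
  have hγ : γk = γk1 - (⟪φ', ψ⟫ / ‖φ'‖ ^ 2) • φ' := by
    rw [hγk, hγk1, key ψ]; abel
  have hε : εk1 = εk2 - (⟪φ', x⟫ / ‖φ'‖ ^ 2) • φ' := by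
    rw [hεk1, hεk2, key x]; abel
  have hmain : ⟪γk, εk1⟫ = ⟪γk1, εk2⟫ - ⟪φ', ψ⟫ * ⟪φ', x⟫ / ‖φ'‖ ^ 2 := by
    rw [hγ, hε]
    simp only [inner_sub_left, inner_sub_right, real_inner_smul_left, real_inner_smul_right,
      real_inner_self_eq_norm_sq]
    rw [real_inner_comm φ' γk1, hγ1φ, hε2φ]
    field_simp
    ring
  have hη' : ⟪ψ, η⟫ = ⟪φ', x⟫ * ⟪γk1, εk2⟫ := by
    rw [hη, inner_smul_right, hψε]
  rw [hmain, hη', sq_abs, sq_abs, sq_abs, sq_abs]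
  have h4 : ‖φ'‖ ^ 4 = ‖φ'‖ ^ 2 * ‖φ'‖ ^ 2 := by ring
  rw [h4]
  field_simp
  ring
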